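/- For the coset representation of modular integers, the number of deviated coset values for any input is at most one: for every g ∈ ℤ/Nℤ, |Deviated_g(COM_{k,N,m})| ≤ 1, and hence Dev(COM_{k,N,m}) ≤ 2^{−m}. -/

import Mathlib

/-- **Deviation bound for the coset representation of modular integers.**
With modulus `N ≥ 1`, padding `m`, offset `k < N`, encoder `f(g, c) = g + cN` into
`ℤ/2^{m+⌈log₂N⌉}ℤ` and encoded permutation `v_k(e) = (e + k) mod 2^{m+⌈log₂N⌉}`:
for every input `g`, at most one coset value `c ∈ {0, …, 2^m − 1}` is deviated
(i.e. fails to decode to an encoding of `(g + k) mod N`), and hence the deviation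
of `COM_{k,N,m}` is at most `2^{−m}`. -/
theorem coset_representation_deviation (N m k : ℕ) (hN : 1 ≤ N) (hk : k < N)
    (g : ℕ) (hg : g < N) :
    (Finset.filter (fun c =>
        ∀ c' ∈ Finset.range (2 ^ m),
          (g + c * N + k) % 2 ^ (m + Nat.clog 2 N) ≠ (g + k) % N + c' * N) (Finset.range (2 ^ m))).card ≤ 1 ∧
    (((Finset.filter (fun c =>
        ∀ c' ∈ Finset.range (2 ^ m),
          (g + c * N + k) % 2 ^ (m + Nat.clog 2 N) ≠ (g + k) % N + c' * N) (Finset.range (2 ^ m))).card : ℝ) /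
      2 ^ m ≤ (2 : ℝ) ^ (-(m : ℤ))) := by
  have h2 : N ≤ 2 ^ Nat.clog 2 N := Nat.le_pow_clog one_lt_two N
  have hsub : (Finset.filter (fun c =>
        ∀ c' ∈ Finset.range (2 ^ m),
          (g + c * N + k) % 2 ^ (m + Nat.clog 2 N) ≠ (g + k) % N + c' * N) (Finset.range (2 ^ m)))
      ⊆ {2 ^ m - 1} := by
    intro c hc
    simp only [Finset.mem_filter, Finset.mem_range] at hc
    obtain ⟨hcr, hdev⟩ := hc
    simp only [Finset.mem_singleton]
    by_contra hne
    have hc2 : c + 2 ≤ 2 ^ m := by omega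
    have hmul : c * N + 2 * N ≤ 2 ^ m * N := by
      have := Nat.mul_le_mul_right N hc2
      rwa [add_mul] at this
    have hlt : g + c * N + k < 2 ^ m * N := by omega
    have hlt2 : g + c * N + k < 2 ^ (m + Nat.clog 2 N) := by
      calc g + c * N + k < 2 ^ m * N := hlt
        _ ≤ 2 ^ m * 2 ^ Nat.clog 2 N := Nat.mul_le_mul_left _ h2
        _ = 2 ^ (m + Nat.clog 2 N) := (pow_add 2 m _).symm
    rw [Nat.mod_eq_of_lt hlt2] at hdev
    by_cases hgk : g + k < N
    · exact hdev c hcr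
        (by rw [Nat.mod_eq_of_lt hgk]; ring)
    · have hmod : (g + k) % N = g + k - N := by
        rw [Nat.mod_eq_sub_mod (by omega), Nat.mod_eq_of_lt (by omega)]
      exact hdev (c + 1) (by omega)
        (by rw [hmod, add_mul]; omega)
  have hcard : (Finset.filter (fun c =>
        ∀ c' ∈ Finset.range (2 ^ m),
          (g + c * N + k) % 2 ^ (m + Nat.clog 2 N) ≠ (g + k) % N + c' * N) (Finset.range (2 ^ m))).card ≤ 1 := by
    simpa using Finset.card_le_card hsub
  refine ⟨hcard, ?_⟩
  rw [div_le_iff₀ (by positivity)]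
  have hone : (2 : ℝ) ^ (-(m : ℤ)) * 2 ^ m = 1 := by
    rw [← zpow_natCast (2 : ℝ) m, ← zpow_add₀ (two_ne_zero)]
    simp
  rw [hone]
  exact_mod_cast hcard
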